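/- If D is a principal ideal domain which is a left V-ring, then every finitely generated uniform nonzero left D-module is either simple or isomorphic to D, and in particular is virtually simple. -/

import Mathlib

open MulOpposite

def VirtuallySimple (R : Type*) [Ring R] (M : Type*) [AddCommGroup M] [Module R M] : Prop :=
  Nontrivial M ∧ ∀ N : Submodule R M, N ≠ ⊥ → Nonempty (N ≃ₗ[R] M)


/-- In a left noetherian domain, any two nonzero elements have a nonzero common
left multiple (left Ore condition). -/
lemma ore_aux {R : Type*} [Ring R] [IsDomain R] [IsNoetherianRing R]
    (a c : R) (ha : a ≠ 0) (hc : c ≠ 0) :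
    ∃ p q : R, p * a = q * c ∧ p * a ≠ 0 := by
  by_contra hcon
  push_neg at hcon
  have h : ∀ p q : R, p * a = q * c → p * a = 0 := fun p q hpq => hcon p q hpq
  set ρ : R →ₗ[R] R := LinearMap.toSpanSingleton R R c with hρ
  have hρ_apply : ∀ y : R, ρ y = y * c := fun y => by
    simp [hρ, LinearMap.toSpanSingleton_apply, smul_eq_mul]
  let I : ℕ → Ideal R := fun n =>
    Nat.rec (Ideal.span {a}) (fun _ J => Ideal.span {a} ⊔ Submodule.map ρ J) n
  have hI0 : I 0 = Ideal.span {a} := rfl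
  have hIsucc : ∀ n, I (n + 1) = Ideal.span {a} ⊔ Submodule.map ρ (I n) := fun n => rfl
  have hmono : ∀ n, I n ≤ I (n + 1) := by
    intro n
    induction n with
    | zero => rw [hIsucc]; exact le_sup_left
    | succ k ih =>
      rw [hIsucc k, hIsucc (k + 1)]
      exact sup_le le_sup_left ((Submodule.map_mono ih).trans le_sup_right)
  have hmem : ∀ n, a * c ^ (n + 1) ∈ I (n + 1) := by
    intro n
    induction n with
    | zero =>
      rw [hIsucc]
      apply Submodule.mem_sup_right
      have ha' : a ∈ I 0 := by
        rw [hI0]; exact Submodule.mem_span_singleton_self a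
      have : ρ a = a * c ^ 1 := by rw [hρ_apply, pow_one]
      exact this ▸ Submodule.mem_map_of_mem ha'
    | succ k ih =>
      rw [hIsucc (k + 1)]
      apply Submodule.mem_sup_right
      have : ρ (a * c ^ (k + 1)) = a * c ^ (k + 2) := by
        rw [hρ_apply, mul_assoc, ← pow_succ]
      exact this ▸ Submodule.mem_map_of_mem ih
  have hkey : ∀ n, a * c ^ (n + 1) ∈ I n → False := by
    intro n
    induction n with
    | zero =>
      intro hm0
      rw [hI0] at hm0
      obtain ⟨d, hd⟩ := Submodule.mem_span_singleton.mp hm0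
      rw [smul_eq_mul] at hd
      have hda : d * a = 0 := h d a (by rw [hd, pow_one])
      rw [hda] at hd
      exact mul_ne_zero ha (pow_ne_zero 1 hc) hd.symm
    | succ k ih =>
      intro hm
      rw [hIsucc k] at hm
      obtain ⟨y, hy, z, hz, hyz⟩ := Submodule.mem_sup.mp hm
      obtain ⟨d, hd⟩ := Submodule.mem_span_singleton.mp hy
      rw [smul_eq_mul] at hd
      obtain ⟨w, hw, hwz⟩ := Submodule.mem_map.mp hz
      rw [hρ_apply] at hwz
      have heq : d * a = (a * c ^ (k + 1) - w) * c :=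
        calc d * a = y := hd
          _ = a * c ^ (k + 1 + 1) - z := by rw [← hyz]; abel
          _ = a * c ^ (k + 1) * c - w * c := by rw [hwz, pow_succ, ← mul_assoc]
          _ = (a * c ^ (k + 1) - w) * c := by rw [sub_mul]
      have hda : d * a = 0 := h d _ heq
      have : (a * c ^ (k + 1) - w) * c = 0 := by rw [← heq, hda]
      have hsub : a * c ^ (k + 1) - w = 0 := by
        rcases mul_eq_zero.mp this with h' | h'
        · exact h'
        · exact absurd h' hc
      have : a * c ^ (k + 1) = w := by rwa [sub_eq_zero] at hsub
      exact ih (this ▸ hw)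
  obtain ⟨N, hN⟩ := (monotone_stabilizes_iff_noetherian.mpr inferInstance)
    ⟨I, monotone_nat_of_le_succ hmono⟩
  have hINeq : I N = I (N + 1) := hN (N + 1) (Nat.le_succ N)
  exact hkey N (hINeq ▸ hmem N)

/-- If a nonzero element of a module over a left principal, right noetherian domain is
torsion, then the module contains a simple submodule (an atom). -/
lemma exists_atom_of_torsion {D U : Type*} [Ring D] [IsDomain D] [AddCommGroup U] [Module D U]
    [IsNoetherianRing Dᵐᵒᵖ]
    (hleft : ∀ I : Ideal D, I.IsPrincipal)
    (x : U) (hx : x ≠ 0) (a : D) (ha : a ≠ 0) (hax : a • x = 0) :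
    ∃ N : Submodule D U, IsAtom N := by
  by_contra hno
  push_neg at hno
  set T : Set (Submodule D U) := {N | N ≠ ⊥ ∧ N ≤ Submodule.span D {x}} with hT
  have hxT : Submodule.span D {x} ∈ T :=
    ⟨by simpa [Submodule.span_singleton_eq_bot] using hx, le_refl _⟩
  have hstep : ∀ N : T, ∃ N' : T, (N' : Submodule D U) < (N : Submodule D U) := by
    rintro ⟨N, hN1, hN2⟩
    have hnotatom := hno N
    rw [IsAtom] at hnotatom
    push_neg at hnotatom
    obtain ⟨b, hbN, hb0⟩ := hnotatom hN1
    exact ⟨⟨b, hb0, le_trans hbN.le hN2⟩, hbN⟩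
  have hF : ∃ f : ℕ → T, ∀ n, ((f (n + 1) : T) : Submodule D U) < ((f n : T) : Submodule D U) := by
    choose g hg using hstep
    exact ⟨fun n => Nat.rec ⟨_, hxT⟩ (fun _ p => g p) n, fun n => hg _⟩
  obtain ⟨f, hdesc⟩ := hF
  set σ := LinearMap.toSpanSingleton D U x with hσ
  set L : ℕ → Ideal D := fun n => Submodule.comap σ ((f n : T) : Submodule D U) with hL
  have hLmap : ∀ n, Submodule.map σ (L n) = ((f n : T) : Submodule D U) := by
    intro n
    apply le_antisymm (Submodule.map_comap_le _ _)
    intro v hv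
    have hvx : v ∈ Submodule.span D {x} := (f n).2.2 hv
    obtain ⟨d, hd⟩ := Submodule.mem_span_singleton.mp hvx
    refine ⟨d, Submodule.mem_comap.mpr ?_, ?_⟩
    · rw [hσ, LinearMap.toSpanSingleton_apply, hd]
      exact hv
    · rw [hσ, LinearMap.toSpanSingleton_apply, hd]
  haveI : ∀ n, (L n).IsPrincipal := fun n => hleft _
  set b : ℕ → D := fun n => Submodule.IsPrincipal.generator (L n) with hb
  have hbspan : ∀ n, Submodule.span D {b n} = L n :=
    fun n => Submodule.IsPrincipal.span_singleton_generator _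
  have haL : ∀ n, a ∈ L n := by
    intro n
    refine Submodule.mem_comap.mpr ?_
    rw [hσ, LinearMap.toSpanSingleton_apply, hax]
    exact Submodule.zero_mem _
  have hb0 : ∀ n, b n ≠ 0 := by
    intro n h0
    have h1 : L n = ⊥ := by rw [← hbspan n, h0, Submodule.span_zero_singleton]
    have h2 : ((f n : T) : Submodule D U) = ⊥ := by
      rw [← hLmap n, h1, Submodule.map_bot]
    exact (f n).2.1 h2
  have hu : ∀ n, ∃ un, un * b n = a := by
    intro n
    obtain ⟨un, h⟩ := Submodule.mem_span_singleton.mp (by rw [hbspan n]; exact haL n)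
    exact ⟨un, by simpa [smul_eq_mul] using h⟩
  choose uu huu using hu
  have hu0 : ∀ n, uu n ≠ 0 := fun n h0 => ha (by rw [← huu n, h0, zero_mul])
  have hLle : ∀ n, L (n + 1) ≤ L n := fun n => Submodule.comap_mono (hdesc n).le
  have hd : ∀ n, ∃ dn, dn * b n = b (n + 1) := by
    intro n
    have hmem : b (n + 1) ∈ Submodule.span D {b n} := by
      rw [hbspan n]
      exact hLle n (by rw [← hbspan (n + 1)]; exact Submodule.mem_span_singleton_self _)
    obtain ⟨dn, h⟩ := Submodule.mem_span_singleton.mp hmem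
    exact ⟨dn, by simpa [smul_eq_mul] using h⟩
  choose dd hdd using hd
  have hud : ∀ n, uu n = uu (n + 1) * dd n := by
    intro n
    have h1 : (uu (n + 1) * dd n) * b n = uu n * b n := by
      rw [mul_assoc, hdd n, huu (n + 1), huu n]
    exact (mul_right_cancel₀ (hb0 n) h1).symm
  set Jop : ℕ → Ideal Dᵐᵒᵖ := fun n => Ideal.span {op (uu n)} with hJop
  have hJmono : ∀ n, Jop n ≤ Jop (n + 1) := by
    intro n
    show Submodule.span Dᵐᵒᵖ {op (uu n)} ≤ Submodule.span Dᵐᵒᵖ {op (uu (n + 1))}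
    rw [Submodule.span_singleton_le_iff_mem]
    have h1 : op (uu n) = op (dd n) * op (uu (n + 1)) := by
      rw [← op_mul, ← hud n]
    rw [h1, ← smul_eq_mul]
    exact Submodule.smul_mem _ _ (Submodule.mem_span_singleton_self _)
  obtain ⟨N, hN⟩ := (monotone_stabilizes_iff_noetherian.mpr inferInstance)
    ⟨Jop, monotone_nat_of_le_succ hJmono⟩
  have hJeq : Jop N = Jop (N + 1) := hN (N + 1) (Nat.le_succ N)
  have hmem2 : op (uu (N + 1)) ∈ Ideal.span {op (uu N)} := by
    show op (uu (N + 1)) ∈ Jop N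
    rw [hJeq]
    exact Submodule.mem_span_singleton_self _
  obtain ⟨W, hW⟩ := Submodule.mem_span_singleton.mp hmem2
  have hW' : uu (N + 1) = uu N * unop W := by
    have h2 := congrArg unop hW
    rw [smul_eq_mul, unop_mul, unop_op] at h2
    exact h2.symm
  set w := unop W with hw
  have hwd : w * dd N = 1 := by
    have h1 : uu N * (w * dd N) = uu N * 1 := by
      rw [mul_one, ← mul_assoc, ← hW', ← hud N]
    exact mul_left_cancel₀ (hu0 N) h1
  have hbrec : b N = w * b (N + 1) := by
    rw [← hdd N, ← mul_assoc, hwd, one_mul]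
  have hLeq : L N = L (N + 1) := by
    refine le_antisymm ?_ (hLle N)
    rw [← hbspan N, ← hbspan (N + 1)]
    rw [Submodule.span_singleton_le_iff_mem, hbrec, ← smul_eq_mul]
    exact Submodule.smul_mem _ _ (Submodule.mem_span_singleton_self _)
  have hfeq : ((f N : T) : Submodule D U) = ((f (N + 1) : T) : Submodule D U) := by
    rw [← hLmap N, ← hLmap (N + 1), hLeq]
  exact (hdesc N).ne hfeq.symm

lemma sup_cyclic {D U : Type*} [Ring D] [IsDomain D] [AddCommGroup U] [Module D U]
    (hleft : ∀ I : Ideal D, I.IsPrincipal)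
    (hore : ∀ a c : D, a ≠ 0 → c ≠ 0 → ∃ p q : D, a * p = c * q ∧ a * p ≠ 0)
    (huniform : ∀ N K : Submodule D U, N ≠ ⊥ → K ≠ ⊥ → N ⊓ K ≠ ⊥)
    (htf : ∀ (a : D) (v : U), a • v = 0 → a = 0 ∨ v = 0)
    (x u : U) :
    ∃ m : U, Submodule.span D {x} ⊔ Submodule.span D {u} = Submodule.span D {m} := by
  rcases eq_or_ne x 0 with rfl | hx
  · exact ⟨u, by rw [Submodule.span_zero_singleton, bot_sup_eq]⟩
  rcases eq_or_ne u 0 with rfl | hu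
  · exact ⟨x, by rw [Submodule.span_zero_singleton, sup_bot_eq]⟩
  -- the ideal J = {b | b • u ∈ D∙x}
  set J : Ideal D := Submodule.comap (LinearMap.toSpanSingleton D U u)
    (Submodule.span D {x}) with hJdef
  haveI := hleft J
  set c := Submodule.IsPrincipal.generator J with hcdef
  have hcJ : Submodule.span D {c} = J := Submodule.IsPrincipal.span_singleton_generator J
  -- c ≠ 0 thanks to uniformity
  have hmeet := huniform (Submodule.span D {x}) (Submodule.span D {u})
    (by simpa [Submodule.span_singleton_eq_bot] using hx)
    (by simpa [Submodule.span_singleton_eq_bot] using hu)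
  obtain ⟨z, hzmem, hz0⟩ := (Submodule.ne_bot_iff _).mp hmeet
  obtain ⟨hzx, hzu⟩ := Submodule.mem_inf.mp hzmem
  obtain ⟨bz, hbz⟩ := Submodule.mem_span_singleton.mp hzu
  have hbzJ : bz ∈ J := Submodule.mem_comap.mpr
    (by rw [LinearMap.toSpanSingleton_apply, hbz]; exact hzx)
  have hc0 : c ≠ 0 := by
    intro h0
    rw [← hcJ] at hbzJ
    rw [h0, Submodule.span_zero_singleton, Submodule.mem_bot] at hbzJ
    rw [hbzJ, zero_smul] at hbz
    exact hz0 hbz.symm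
  -- the relation a₀ • x + c • u = 0
  have hcmem : c ∈ J := by rw [← hcJ]; exact Submodule.mem_span_singleton_self c
  have hcu : c • u ∈ Submodule.span D {x} := by
    have h' := Submodule.mem_comap.mp hcmem
    rwa [LinearMap.toSpanSingleton_apply] at h'
  obtain ⟨a1, ha1⟩ := Submodule.mem_span_singleton.mp hcu
  set a0 : D := -a1 with ha0def
  have hrel : a0 • x + c • u = 0 := by rw [ha0def, neg_smul, ha1, neg_add_cancel]
  have ha00 : a0 ≠ 0 := by
    intro h0
    rw [h0, zero_smul, zero_add] at hrel
    rcases htf c u hrel with h | h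
    · exact hc0 h
    · exact hu h
  -- Ore: find p q with a0 * p + c * q = 0, p ≠ 0
  obtain ⟨p, q', hpq', hpq'0⟩ := hore a0 c ha00 hc0
  set q : D := -q' with hqdef
  have hpq : a0 * p + c * q = 0 := by rw [hqdef, mul_neg, hpq', add_neg_cancel]
  have hp0 : p ≠ 0 := fun h0 => hpq'0 (by rw [h0, mul_zero])
  -- the two coprod maps
  set ψ : D × D →ₗ[D] U := LinearMap.coprod (LinearMap.toSpanSingleton D U x)
    (LinearMap.toSpanSingleton D U u) with hψdef
  set χ : D × D →ₗ[D] D := LinearMap.coprod (LinearMap.toSpanSingleton D D p)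
    (LinearMap.toSpanSingleton D D q) with hχdef
  have hψ_apply : ∀ v : D × D, ψ v = v.1 • x + v.2 • u := fun v => by
    simp [hψdef, LinearMap.coprod_apply, LinearMap.toSpanSingleton_apply]
  have hχ_apply : ∀ v : D × D, χ v = v.1 * p + v.2 * q := fun v => by
    simp [hχdef, LinearMap.coprod_apply, LinearMap.toSpanSingleton_apply, smul_eq_mul]
  have hkerle : LinearMap.ker ψ ≤ LinearMap.ker χ := by
    rintro ⟨a, b⟩ hab
    rw [LinearMap.mem_ker, hψ_apply] at hab
    rw [LinearMap.mem_ker, hχ_apply]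
    simp only at hab ⊢
    -- b ∈ J
    have hbu : b • u ∈ Submodule.span D {x} := by
      have hneg : b • u = -(a • x) := by
        calc b • u = (a • x + b • u) - a • x := by abel
          _ = -(a • x) := by rw [hab]; abel
      rw [hneg]
      exact Submodule.neg_mem _ (Submodule.smul_mem _ _ (Submodule.mem_span_singleton_self x))
    have hbJ : b ∈ J := Submodule.mem_comap.mpr
      (by rw [LinearMap.toSpanSingleton_apply]; exact hbu)
    rw [← hcJ] at hbJ
    obtain ⟨r, hr⟩ := Submodule.mem_span_singleton.mp hbJ
    rw [smul_eq_mul] at hr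
    -- a = r * a0
    have hax : a • x = (r * a0) • x := by
      have h1 : c • u = -(a0 • x) := by
        calc c • u = (a0 • x + c • u) - a0 • x := by abel
          _ = -(a0 • x) := by rw [hrel]; abel
      have h2 : b • u = -((r * a0) • x) := by
        rw [← hr, mul_smul, mul_smul, h1, smul_neg]
      have h3 : a • x = -(b • u) := by
        calc a • x = (a • x + b • u) - b • u := by abel
          _ = -(b • u) := by rw [hab]; abel
      rw [h3, h2, neg_neg]
    have haeq : a = r * a0 := by
      have h4 : (a - r * a0) • x = 0 := by rw [sub_smul, hax, sub_self]
      rcases htf _ _ h4 with h | h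
      · exact sub_eq_zero.mp h
      · exact absurd h hx
    rw [haeq, ← hr, mul_assoc, mul_assoc, ← mul_add, hpq, mul_zero]
  -- the induced map φ on the range of ψ
  set φ : ↥(LinearMap.range ψ) →ₗ[D] D :=
    (Submodule.liftQ (LinearMap.ker ψ) χ hkerle).comp
      (LinearMap.quotKerEquivRange ψ).symm.toLinearMap with hφdef
  have hφ_apply : ∀ (v : D × D) (hv : ψ v ∈ LinearMap.range ψ), φ ⟨ψ v, hv⟩ = χ v := by
    intro v hv
    rw [hφdef]
    simp only [LinearMap.coe_comp, Function.comp_apply, LinearEquiv.coe_coe]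
    rw [LinearMap.quotKerEquivRange_symm_apply_image ψ v hv]
    rw [Submodule.mkQ_apply, Submodule.liftQ_apply]
  -- the range of χ is principal
  haveI := hleft (LinearMap.range χ)
  set t := Submodule.IsPrincipal.generator (LinearMap.range χ) with htdef
  have htspan : Submodule.span D {t} = LinearMap.range χ :=
    Submodule.IsPrincipal.span_singleton_generator _
  have ht0 : t ≠ 0 := by
    intro h0
    have hpmem : p ∈ LinearMap.range χ := ⟨(1, 0), by rw [hχ_apply]; simp⟩
    rw [← htspan, h0, Submodule.span_zero_singleton, Submodule.mem_bot] at hpmem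
    exact hp0 hpmem
  obtain ⟨v0, hv0⟩ : ∃ v0, χ v0 = t :=
    LinearMap.mem_range.mp (Submodule.IsPrincipal.generator_mem (LinearMap.range χ))
  set m0 : ↥(LinearMap.range ψ) := ⟨ψ v0, ⟨v0, rfl⟩⟩ with hm0def
  have hφm0 : φ m0 = t := by rw [hm0def]; exact (hφ_apply v0 _).trans hv0
  have hm00 : (m0 : U) ≠ 0 := by
    intro h0
    have : m0 = 0 := Subtype.ext h0
    rw [this, map_zero] at hφm0
    exact ht0 hφm0.symm
  -- kernel of φ is trivial, by uniformity
  have hkerφ : ∀ w : ↥(LinearMap.range ψ), φ w = 0 → w = 0 := by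
    have hKS : Submodule.map (LinearMap.range ψ).subtype (LinearMap.ker φ) ⊓
        Submodule.span D {(m0 : U)} = ⊥ := by
      rw [eq_bot_iff]
      rintro w hw
      obtain ⟨hwK, hwS⟩ := Submodule.mem_inf.mp hw
      obtain ⟨k, hk, hkw⟩ := Submodule.mem_map.mp hwK
      obtain ⟨s, hs⟩ := Submodule.mem_span_singleton.mp hwS
      have hkcoe : (k : U) = w := hkw
      have hkval : k = s • m0 := by
        apply Subtype.ext
        rw [Submodule.coe_smul, hkcoe, ← hs]
      have hst : s * t = 0 := by
        have h1 : φ k = 0 := LinearMap.mem_ker.mp hk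
        rw [hkval, map_smul, hφm0, smul_eq_mul] at h1
        exact h1
      have hs0 : s = 0 := (mul_eq_zero.mp hst).resolve_right ht0
      rw [Submodule.mem_bot, ← hs, hs0, zero_smul]
    have hKbot : Submodule.map (LinearMap.range ψ).subtype (LinearMap.ker φ) = ⊥ := by
      by_contra hne
      exact huniform _ _ hne
        (by simpa [Submodule.span_singleton_eq_bot] using hm00) hKS
    intro w hw
    have : (w : U) ∈ Submodule.map (LinearMap.range ψ).subtype (LinearMap.ker φ) :=
      Submodule.mem_map_of_mem (LinearMap.mem_ker.mpr hw)
    rw [hKbot, Submodule.mem_bot] at this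
    exact Subtype.ext this
  -- conclusion
  refine ⟨(m0 : U), ?_⟩
  have hrange : Submodule.span D {x} ⊔ Submodule.span D {u} = LinearMap.range ψ := by
    rw [hψdef, LinearMap.range_coprod, LinearMap.span_singleton_eq_range,
      LinearMap.span_singleton_eq_range]
  rw [hrange]
  apply le_antisymm
  · rintro n ⟨v, hv⟩
    have hn : n ∈ LinearMap.range ψ := ⟨v, hv⟩
    have hχv : χ v ∈ LinearMap.range χ := ⟨v, rfl⟩
    rw [← htspan] at hχv
    obtain ⟨s, hs⟩ := Submodule.mem_span_singleton.mp hχv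
    have hφn : φ ⟨n, hn⟩ = χ v := by
      subst hv
      exact hφ_apply v hn
    have hker : (⟨n, hn⟩ : ↥(LinearMap.range ψ)) - s • m0 = 0 := by
      apply hkerφ
      rw [map_sub, map_smul, hφn, hφm0, hs, sub_self]
    have : (⟨n, hn⟩ : ↥(LinearMap.range ψ)) = s • m0 := by
      rwa [sub_eq_zero] at hker
    have hcoe := congrArg (Subtype.val) this
    rw [Submodule.coe_smul] at hcoe
    exact Submodule.mem_span_singleton.mpr ⟨s, hcoe.symm⟩
  · rw [Submodule.span_singleton_le_iff_mem]
    exact m0.2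

/-- If `D` is a principal ideal domain which is a left V-ring, then every finitely
generated uniform nonzero left `D`-module is simple or isomorphic to `D`, and in
particular virtually simple. -/
theorem stmt14 (D : Type u) [Ring D] [IsDomain D]
    (hleft : ∀ I : Ideal D, I.IsPrincipal)
    (hright : ∀ I : Ideal Dᵐᵒᵖ, I.IsPrincipal)
    (hV : ∀ (S : Type u) [AddCommGroup S] [Module D S], IsSimpleModule D S →
      Module.Injective D S)
    (U : Type u) [AddCommGroup U] [Module D U] [Module.Finite D U] [Nontrivial U]
    (huniform : ∀ N K : Submodule D U, N ≠ ⊥ → K ≠ ⊥ → N ⊓ K ≠ ⊥) :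
    (IsSimpleModule D U ∨ Nonempty (U ≃ₗ[D] D)) ∧ VirtuallySimple D U := by
  haveI hNoethD : IsNoetherianRing D :=
    (isNoetherianRing_iff_ideal_fg D).mpr fun I => (hleft I).fg
  haveI hNoethOp : IsNoetherianRing Dᵐᵒᵖ :=
    (isNoetherianRing_iff_ideal_fg Dᵐᵒᵖ).mpr fun I => (hright I).fg
  by_cases hatom : ∃ S : Submodule D U, IsAtom S
  · -- U has a simple submodule; by injectivity and uniformity U is simple.
    obtain ⟨S, hS⟩ := hatom
    haveI hsimp : IsSimpleModule D ↥S := isSimpleModule_iff_isAtom.mpr hS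
    have hinj : Module.Injective D ↥S := hV ↥S hsimp
    obtain ⟨r, hr⟩ := hinj.out S.subtype S.injective_subtype LinearMap.id
    set ρ : U →ₗ[D] U := S.subtype.comp r with hρdef
    have hmemS : ∀ s : U, ρ s ∈ S := fun s => (r s).2
    have hfix : ∀ s : U, s ∈ S → ρ s = s := by
      intro s hs
      have h1 : r s = ⟨s, hs⟩ := by
        have h2 := hr ⟨s, hs⟩
        simpa using h2
      show S.subtype (r s) = s
      rw [h1]
      rfl
    have hKS : LinearMap.ker ρ ⊓ S = ⊥ := by
      rw [eq_bot_iff]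
      rintro w hw
      obtain ⟨hw1, hw2⟩ := Submodule.mem_inf.mp hw
      have h1 : ρ w = 0 := LinearMap.mem_ker.mp hw1
      rw [hfix w hw2] at h1
      rw [Submodule.mem_bot]
      exact h1
    have hker : LinearMap.ker ρ = ⊥ := by
      by_contra hne
      exact huniform _ _ hne hS.1 hKS
    have hStop : S = ⊤ := by
      rw [eq_top_iff]
      intro s _
      have h0 : ρ (s - ρ s) = 0 := by
        rw [map_sub, hfix (ρ s) (hmemS s), sub_self]
      have h1 : s - ρ s ∈ LinearMap.ker ρ := LinearMap.mem_ker.mpr h0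
      rw [hker, Submodule.mem_bot, sub_eq_zero] at h1
      rw [h1]
      exact hmemS s
    rw [hStop] at hS
    haveI hnontrivlat : Nontrivial (Submodule D U) := by
      refine ⟨⊥, ⊤, fun h => ?_⟩
      obtain ⟨u0, hu0⟩ := exists_ne (0 : U)
      have hmem : u0 ∈ (⊥ : Submodule D U) := by rw [h]; trivial
      rw [Submodule.mem_bot] at hmem
      exact hu0 hmem
    haveI hsimpleU : IsSimpleModule D U := by
      refine { toIsSimpleOrder := ⟨fun N => ?_⟩ }
      rcases lt_or_eq_of_le (le_top : N ≤ ⊤) with hlt | heq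
      · exact Or.inl (hS.2 N hlt)
      · exact Or.inr heq
    refine ⟨Or.inl hsimpleU, ‹Nontrivial U›, ?_⟩
    intro N hN
    have hNtop : N = ⊤ := (eq_bot_or_eq_top N).resolve_left hN
    exact ⟨(LinearEquiv.ofEq N ⊤ hNtop).trans Submodule.topEquiv⟩
  · -- U has no simple submodule, hence is torsion-free, hence U ≃ D.
    have htf : ∀ (a : D) (v : U), a • v = 0 → a = 0 ∨ v = 0 := by
      intro a v hav
      by_contra hcon
      push_neg at hcon
      exact hatom (exists_atom_of_torsion hleft v hcon.2 a hcon.1 hav)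
    have hore : ∀ a c : D, a ≠ 0 → c ≠ 0 → ∃ p q : D, a * p = c * q ∧ a * p ≠ 0 := by
      intro a c ha hc
      obtain ⟨P, Q, h1, h2⟩ := ore_aux (op a) (op c) (by simpa using ha) (by simpa using hc)
      refine ⟨P.unop, Q.unop, ?_, ?_⟩
      · have h3 := congrArg unop h1
        rw [unop_mul, unop_mul, unop_op, unop_op] at h3
        exact h3
      · intro h0
        apply h2
        have h4 : P * op a = op (a * P.unop) := by rw [op_mul, op_unop]
        rw [h4, h0, op_zero]
    have hcyc : ∀ N : Submodule D U, N.FG → ∃ m : U, N = Submodule.span D {m} := by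
      intro N hfg
      refine Submodule.fg_induction (motive := fun K _ => ∃ m : U, K = Submodule.span D {m})
        (fun y => ⟨y, rfl⟩) ?_ N hfg
      rintro N₁ N₂ _ _ ⟨m₁, rfl⟩ ⟨m₂, rfl⟩
      obtain ⟨m, hm⟩ := sup_cyclic hleft hore huniform htf m₁ m₂
      exact ⟨m, hm⟩
    obtain ⟨y, hy⟩ := hcyc ⊤ Module.Finite.fg_top
    have hy0 : y ≠ 0 := by
      intro h0
      obtain ⟨u0, hu0⟩ := exists_ne (0 : U)
      have hmem : u0 ∈ (⊤ : Submodule D U) := trivial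
      rw [hy, h0, Submodule.span_zero_singleton, Submodule.mem_bot] at hmem
      exact hu0 hmem
    have hbij : Function.Bijective (LinearMap.toSpanSingleton D U y) := by
      constructor
      · intro a b hab
        have hab' : a • y = b • y := by
          simpa [LinearMap.toSpanSingleton_apply] using hab
        have h1 : (a - b) • y = 0 := by rw [sub_smul, hab', sub_self]
        rcases htf _ _ h1 with h | h
        · exact sub_eq_zero.mp h
        · exact absurd h hy0
      · intro v
        have hv : v ∈ Submodule.span D {y} := by rw [← hy]; trivial
        obtain ⟨s, hs⟩ := Submodule.mem_span_singleton.mp hv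
        exact ⟨s, by rw [LinearMap.toSpanSingleton_apply]; exact hs⟩
    set e : D ≃ₗ[D] U := LinearEquiv.ofBijective _ hbij with hedef
    haveI : IsNoetherian D U := isNoetherian_of_isNoetherianRing_of_finite D U
    refine ⟨Or.inr ⟨e.symm⟩, ‹Nontrivial U›, ?_⟩
    intro N hN
    obtain ⟨m, hm⟩ := hcyc N (IsNoetherian.noetherian N)
    have hm0 : m ≠ 0 := by
      intro h0
      rw [h0, Submodule.span_zero_singleton] at hm
      exact hN hm
    have hmemN : ∀ a : D, a • m ∈ N := by
      intro a
      rw [hm]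
      exact Submodule.smul_mem _ _ (Submodule.mem_span_singleton_self m)
    set g : D →ₗ[D] ↥N := LinearMap.codRestrict N (LinearMap.toSpanSingleton D U m)
      (fun a => by rw [LinearMap.toSpanSingleton_apply]; exact hmemN a) with hgdef
    have hgcoe : ∀ a : D, ((g a : ↥N) : U) = a • m := fun a => by
      rw [hgdef, LinearMap.codRestrict_apply, LinearMap.toSpanSingleton_apply]
    have hgbij : Function.Bijective g := by
      constructor
      · intro a b hab
        have hab' : a • m = b • m := by
          rw [← hgcoe a, ← hgcoe b, hab]
        have h1 : (a - b) • m = 0 := by rw [sub_smul, hab', sub_self]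
        rcases htf _ _ h1 with h | h
        · exact sub_eq_zero.mp h
        · exact absurd h hm0
      · rintro ⟨v, hv⟩
        rw [hm] at hv
        obtain ⟨s, hs⟩ := Submodule.mem_span_singleton.mp hv
        refine ⟨s, Subtype.ext ?_⟩
        rw [hgcoe s]
        exact hs
    exact ⟨(LinearEquiv.ofBijective g hgbij).symm.trans e⟩
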